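/- Consider the combinatorial auction problem with asymmetric channels, where each channel j ∈ [k] has its own conflict graph G_j = (V, E_j), all G_j having inductive independence number at most ρ ≥ 1 with respect to a common ordering π. Let x be a fractional LP solution of the asymmetric LP with value b*. Then there exists a feasible allocation S with b(S) ≥ b*/(4·k·ρ). (This is the existence form of the O(k·ρ)-approximation guarantee of the adapted randomized rounding algorithm for asymmetric channels.) -/

import Mathlib

open Finset

/-- Backward neighborhood of `v` in `G` w.r.t. the ordering `π`. -/
def BackNbhd {n : ℕ} (G : SimpleGraph (Fin n)) [DecidableRel G.Adj]
    (π : Equiv.Perm (Fin n)) (v : Fin n) : Finset (Fin n) :=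
  univ.filter fun u => G.Adj u v ∧ π u < π v

/-- `M` is an independent set of `G`. -/
def IsIndepSet {n : ℕ} (G : SimpleGraph (Fin n)) (M : Finset (Fin n)) : Prop :=
  ∀ u ∈ M, ∀ u' ∈ M, u ≠ u' → ¬ G.Adj u u'

/-- `G` has inductive independence number at most `ρ` with respect to `π`. -/
def IndIndepAtMost {n : ℕ} (G : SimpleGraph (Fin n)) [DecidableRel G.Adj]
    (π : Equiv.Perm (Fin n)) (ρ : ℝ) : Prop :=
  ∀ (v : Fin n) (M : Finset (Fin n)), IsIndepSet G M →
    ((M ∩ BackNbhd G π v).card : ℝ) ≤ ρ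

/-- `x` is a fractional solution of the asymmetric-channels LP, where channel
`j` has conflict graph `G j`. -/
def AsymIsLPSol {n k : ℕ} (G : Fin k → SimpleGraph (Fin n))
    [∀ j, DecidableRel (G j).Adj] (π : Equiv.Perm (Fin n)) (ρ : ℝ)
    (x : Fin n → Finset (Fin k) → ℝ) : Prop :=
  (∀ v T, 0 ≤ x v T) ∧
  (∀ (v : Fin n) (j : Fin k),
      ∑ u ∈ BackNbhd (G j) π v,
        ∑ T ∈ univ.filter (fun T : Finset (Fin k) => j ∈ T), x u T ≤ ρ) ∧
  (∀ v : Fin n, ∑ T : Finset (Fin k), x v T ≤ 1)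

/-- `S` is feasible for asymmetric channels: for each channel `j`, the set of
vertices assigned channel `j` is an independent set of `G j`. -/
def AsymFeasibleAlloc {n k : ℕ} (G : Fin k → SimpleGraph (Fin n))
    (S : Fin n → Finset (Fin k)) : Prop :=
  ∀ (j : Fin k) (u v : Fin n), u ≠ v → j ∈ S u → j ∈ S v → ¬ (G j).Adj u v

/-! ### Auxiliary machinery for randomized rounding -/

/-- Sum over a finite function space of a product equals product of sums. -/
lemma sum_pi_prod {n : ℕ} {β : Type*} [Fintype β] [DecidableEq β]
    (f : Fin n → β → ℝ) :
    ∑ ω : Fin n → β, ∏ i, f i (ω i) = ∏ i, ∑ t, f i t := by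
  rw [Finset.prod_univ_sum, Fintype.piFinset_univ]

/-- The rounded allocation: a vertex keeps its tentatively chosen set
iff no backward neighbor tentatively chose a conflicting channel. -/
def RoundAlloc {n k : ℕ} (G : Fin k → SimpleGraph (Fin n))
    [∀ j, DecidableRel (G j).Adj] (π : Equiv.Perm (Fin n))
    (ω : Fin n → Option (Finset (Fin k))) (v : Fin n) : Finset (Fin k) :=
  if ∀ j ∈ (ω v).getD ∅, ∀ u ∈ BackNbhd (G j) π v, j ∉ ((ω u).getD ∅) then
    (ω v).getD ∅
  else ∅

lemma roundAlloc_subset {n k : ℕ} (G : Fin k → SimpleGraph (Fin n))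
    [∀ j, DecidableRel (G j).Adj] (π : Equiv.Perm (Fin n))
    (ω : Fin n → Option (Finset (Fin k))) (v : Fin n) :
    RoundAlloc G π ω v ⊆ (ω v).getD ∅ := by
  unfold RoundAlloc; split <;> simp

lemma roundAlloc_half {n k : ℕ} (G : Fin k → SimpleGraph (Fin n))
    [∀ j, DecidableRel (G j).Adj] (π : Equiv.Perm (Fin n))
    (ω : Fin n → Option (Finset (Fin k))) {j : Fin k} {u v : Fin n}
    (hlt : π u < π v) (hadj : (G j).Adj u v)
    (hju : j ∈ RoundAlloc G π ω u) (hjv : j ∈ RoundAlloc G π ω v) : False := by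
  have hu : j ∈ (ω u).getD ∅ := roundAlloc_subset G π ω u hju
  unfold RoundAlloc at hjv
  split at hjv
  · next hcond => exact hcond j hjv u (by simp [BackNbhd, hadj, hlt]) hu
  · simp at hjv

lemma roundAlloc_feasible {n k : ℕ} (G : Fin k → SimpleGraph (Fin n))
    [∀ j, DecidableRel (G j).Adj] (π : Equiv.Perm (Fin n))
    (ω : Fin n → Option (Finset (Fin k))) :
    AsymFeasibleAlloc G (RoundAlloc G π ω) := by
  intro j u v huv hju hjv hadj
  rcases lt_trichotomy (π u) (π v) with h | h | h
  · exact roundAlloc_half G π ω h hadj hju hjv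
  · exact huv (π.injective h)
  · exact roundAlloc_half G π ω h hadj.symm hjv hju

/-- Marginal of a product distribution in one coordinate. -/
lemma sum_pi_single {n : ℕ} {β : Type*} [Fintype β] [DecidableEq β]
    (w : Fin n → β → ℝ) (hw1 : ∀ i, ∑ t, w i t = 1) (v : Fin n) (g : β → ℝ) :
    ∑ ω : Fin n → β, (∏ i, w i (ω i)) * g (ω v) = ∑ t, w v t * g t := by
  have key : ∀ ω : Fin n → β, ∏ i, (if i = v then g (ω i) else 1) = g (ω v) := by
    intro ω
    rw [Finset.prod_eq_single_of_mem v (Finset.mem_univ v) fun i _ hi => if_neg hi]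
    exact if_pos rfl
  calc ∑ ω : Fin n → β, (∏ i, w i (ω i)) * g (ω v)
      = ∑ ω : Fin n → β, ∏ i, (w i (ω i) * (if i = v then g (ω i) else 1)) := by
        refine Finset.sum_congr rfl fun ω _ => ?_
        rw [Finset.prod_mul_distrib, key ω]
    _ = ∏ i, ∑ t, (w i t * (if i = v then g t else 1)) :=
        sum_pi_prod fun i t => w i t * (if i = v then g t else 1)
    _ = ∑ t, w v t * g t := by
        rw [Finset.prod_eq_single_of_mem v (Finset.mem_univ v)
          (fun i _ hi => by simp only [if_neg hi, mul_one]; exact hw1 i)]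
        simp

/-- Marginal of a product distribution in two coordinates. -/
lemma sum_pi_pair {n : ℕ} {β : Type*} [Fintype β] [DecidableEq β]
    (w : Fin n → β → ℝ) (hw1 : ∀ i, ∑ t, w i t = 1) {v u : Fin n} (hvu : v ≠ u)
    (g h : β → ℝ) :
    ∑ ω : Fin n → β, (∏ i, w i (ω i)) * (g (ω v) * h (ω u))
      = (∑ t, w v t * g t) * (∑ t, w u t * h t) := by
  have hpair : ∀ q : Fin n → ℝ, (∀ i, i ≠ v → i ≠ u → q i = 1) →
      ∏ i, q i = q v * q u := by
    intro q hq
    rw [← Finset.prod_pair hvu]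
    refine (Finset.prod_subset (Finset.subset_univ _) fun i _ hi => ?_).symm
    simp only [Finset.mem_insert, Finset.mem_singleton] at hi
    push_neg at hi
    exact hq i hi.1 hi.2
  have key : ∀ ω : Fin n → β,
      ∏ i, (if i = v then g (ω i) else if i = u then h (ω i) else 1)
        = g (ω v) * h (ω u) := by
    intro ω
    rw [hpair _ fun i hi1 hi2 => by rw [if_neg hi1, if_neg hi2]]
    rw [if_pos rfl, if_neg (Ne.symm hvu), if_pos rfl]
  calc ∑ ω : Fin n → β, (∏ i, w i (ω i)) * (g (ω v) * h (ω u))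
      = ∑ ω : Fin n → β,
          ∏ i, (w i (ω i) * (if i = v then g (ω i) else if i = u then h (ω i) else 1)) := by
        refine Finset.sum_congr rfl fun ω _ => ?_
        rw [Finset.prod_mul_distrib, key ω]
    _ = ∏ i, ∑ t, (w i t * (if i = v then g t else if i = u then h t else 1)) :=
        sum_pi_prod fun i t => w i t * (if i = v then g t else if i = u then h t else 1)
    _ = (∑ t, w v t * g t) * (∑ t, w u t * h t) := by
        rw [hpair _ (fun i hi1 hi2 => by
          simp only [if_neg hi1, if_neg hi2, mul_one]; exact hw1 i)]
        simp [Ne.symm hvu]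

/-- rounding guarantee for asymmetric channels: there is a
feasible allocation with value at least `b* / (4 k ρ)`. -/
theorem exists_feasible_alloc_asymmetric {n k : ℕ} (hk : 1 ≤ k)
    (G : Fin k → SimpleGraph (Fin n)) [∀ j, DecidableRel (G j).Adj]
    (π : Equiv.Perm (Fin n)) (ρ : ℝ) (hρ : 1 ≤ ρ)
    (hind : ∀ j : Fin k, IndIndepAtMost (G j) π ρ)
    (b : Fin n → Finset (Fin k) → ℝ) (hb : ∀ v T, 0 ≤ b v T)
    (hb0 : ∀ v, b v ∅ = 0)
    (x : Fin n → Finset (Fin k) → ℝ) (hx : AsymIsLPSol G π ρ x) :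
    ∃ S : Fin n → Finset (Fin k), AsymFeasibleAlloc G S ∧
      (∑ v : Fin n, ∑ T : Finset (Fin k), b v T * x v T) / (4 * k * ρ)
        ≤ ∑ v : Fin n, b v (S v) := by
  classical
  obtain ⟨hx0, hxLP, hx1⟩ := hx
  have hk' : (1:ℝ) ≤ (k:ℝ) := by exact_mod_cast hk
  have hρ0 : (0:ℝ) < ρ := lt_of_lt_of_le one_pos hρ
  set c : ℝ := 2 * k * ρ with hc
  have hc2 : (2:ℝ) ≤ c := by nlinarith
  have hc0 : (0:ℝ) < c := by linarith
  -- the weights of the product distribution (tentative random choices)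
  set w : Fin n → Option (Finset (Fin k)) → ℝ :=
    fun v o => Option.elim o (1 - (∑ T : Finset (Fin k), x v T) / c)
      (fun T => x v T / c) with hwdef
  have hwsome : ∀ v T, w v (some T) = x v T / c := fun v T => rfl
  have hw0 : ∀ v o, 0 ≤ w v o := by
    intro v o
    cases o with
    | none =>
        have h1 : (∑ T : Finset (Fin k), x v T) / c ≤ 1 := by
          rw [div_le_one hc0]; exact le_trans (hx1 v) (by linarith)
        show (0:ℝ) ≤ 1 - (∑ T : Finset (Fin k), x v T) / c
        linarith
    | some T => exact div_nonneg (hx0 v T) hc0.le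
  have hw1 : ∀ v, ∑ o : Option (Finset (Fin k)), w v o = 1 := by
    intro v
    rw [Fintype.sum_option]
    show 1 - (∑ T : Finset (Fin k), x v T) / c
        + (∑ T : Finset (Fin k), x v T / c) = 1
    rw [← Finset.sum_div]
    ring
  set P : (Fin n → Option (Finset (Fin k))) → ℝ := fun ω => ∏ i, w i (ω i)
    with hPdef
  have hP0 : ∀ ω, 0 ≤ P ω := fun ω => Finset.prod_nonneg fun i _ => hw0 i (ω i)
  have hP1 : ∑ ω : Fin n → Option (Finset (Fin k)), P ω = 1 := by
    show ∑ ω : Fin n → Option (Finset (Fin k)), ∏ i, w i (ω i) = 1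
    rw [sum_pi_prod]
    exact Finset.prod_eq_one fun i _ => hw1 i
  have hne : ∀ (j : Fin k) (v u : Fin n), u ∈ BackNbhd (G j) π v → u ≠ v := by
    intro j v u hu
    rw [BackNbhd, Finset.mem_filter] at hu
    exact fun h => (G j).loopless.irrefl v (h ▸ hu.2.1)
  -- abbreviation for channel loads
  set y : Fin k → Fin n → ℝ :=
    fun j u => ∑ U ∈ univ.filter (fun U : Finset (Fin k) => j ∈ U), x u U
    with hydef
  have hy0 : ∀ j u, 0 ≤ y j u :=
    fun j u => Finset.sum_nonneg fun U _ => hx0 u U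
  -- single-coordinate expectations
  have hgsum : ∀ (v : Fin n) (T : Finset (Fin k)),
      (∑ o : Option (Finset (Fin k)),
        w v o * (if o = some T then (1:ℝ) else 0)) = x v T / c := by
    intro v T
    rw [Fintype.sum_option]
    simp only [reduceCtorEq, if_false, mul_zero, zero_add, Option.some.injEq,
      mul_ite, mul_one]
    rw [Finset.sum_ite_eq' univ T (fun U => w v (some U))]
    simp [hwsome]
  have hhsum : ∀ (u : Fin n) (j : Fin k),
      (∑ o : Option (Finset (Fin k)),
        w u o * (if j ∈ o.getD ∅ then (1:ℝ) else 0)) = y j u / c := by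
    intro u j
    rw [Fintype.sum_option]
    simp only [Option.getD_none, Finset.notMem_empty, if_false, mul_zero,
      zero_add, Option.getD_some]
    rw [hydef]
    simp only []
    rw [Finset.sum_filter, Finset.sum_div]
    refine Finset.sum_congr rfl fun U _ => ?_
    by_cases hU : j ∈ U <;> simp [hU, hwsome]
  have hE1 : ∀ (v : Fin n) (T : Finset (Fin k)),
      (∑ ω : Fin n → Option (Finset (Fin k)),
        P ω * (if ω v = some T then (1:ℝ) else 0)) = x v T / c := by
    intro v T
    have := sum_pi_single w hw1 v (fun o => if o = some T then (1:ℝ) else 0)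
    rw [hPdef]
    rw [this, hgsum]
  have hE2 : ∀ (v : Fin n) (T : Finset (Fin k)) (j : Fin k) (u : Fin n),
      u ≠ v →
      (∑ ω : Fin n → Option (Finset (Fin k)),
        P ω * (if ω v = some T ∧ j ∈ (ω u).getD ∅ then (1:ℝ) else 0))
        = (x v T / c) * (y j u / c) := by
    intro v T j u huv
    have hconj : ∀ ω : Fin n → Option (Finset (Fin k)),
        (if ω v = some T ∧ j ∈ (ω u).getD ∅ then (1:ℝ) else 0)
          = (if ω v = some T then (1:ℝ) else 0)
            * (if j ∈ (ω u).getD ∅ then (1:ℝ) else 0) := by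
      intro ω
      by_cases h1 : ω v = some T <;> by_cases h2 : j ∈ (ω u).getD ∅ <;>
        simp [h1, h2]
    rw [Finset.sum_congr rfl fun ω _ => by rw [hconj ω]]
    rw [hPdef]
    rw [sum_pi_pair w hw1 (Ne.symm huv)
      (fun o => if o = some T then (1:ℝ) else 0)
      (fun o => if j ∈ o.getD ∅ then (1:ℝ) else 0)]
    rw [hgsum, hhsum]
  -- pointwise lower bound on the value of the rounded allocation
  have hpt : ∀ (v : Fin n) (ω : Fin n → Option (Finset (Fin k))),
      (∑ T : Finset (Fin k), b v T *
        ((if ω v = some T then (1:ℝ) else 0)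
          - ∑ j ∈ T, ∑ u ∈ BackNbhd (G j) π v,
              (if ω v = some T ∧ j ∈ (ω u).getD ∅ then (1:ℝ) else 0)))
        ≤ b v (RoundAlloc G π ω v) := by
    intro v ω
    rcases Option.eq_none_or_eq_some (ω v) with hv | ⟨T₀, hv⟩
    · have hS : RoundAlloc G π ω v = ∅ := by
        simp [RoundAlloc, hv]
      rw [hS, hb0]
      refine le_of_eq (Finset.sum_eq_zero fun T _ => ?_)
      simp [hv]
    · have h1 : (if ω v = some T₀ then (1:ℝ) else 0) = 1 := by simp [hv]
      rw [Finset.sum_eq_single T₀ (fun T _ hT => by simp [hv, Ne.symm hT])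
        (fun h => absurd (Finset.mem_univ T₀) h)]
      by_cases hcond : ∀ j ∈ T₀, ∀ u ∈ BackNbhd (G j) π v, j ∉ ((ω u).getD ∅)
      · have hS : RoundAlloc G π ω v = T₀ := by
          simp only [RoundAlloc, hv, Option.getD_some]
          rw [if_pos hcond]
        have hz : (∑ j ∈ T₀, ∑ u ∈ BackNbhd (G j) π v,
            (if ω v = some T₀ ∧ j ∈ (ω u).getD ∅ then (1:ℝ) else 0)) = 0 := by
          refine Finset.sum_eq_zero fun j hj => Finset.sum_eq_zero fun u hu => ?_
          simp [hcond j hj u hu]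
        rw [hS, h1, hz]
        simp
      · have hS : RoundAlloc G π ω v = ∅ := by
          simp only [RoundAlloc, hv, Option.getD_some]
          rw [if_neg hcond]
        rw [hS, hb0, h1]
        push_neg at hcond
        obtain ⟨j, hj, u, hu, hju⟩ := hcond
        have hnn : ∀ (j' : Fin k) (u' : Fin n), (0:ℝ) ≤
            (if ω v = some T₀ ∧ j' ∈ (ω u').getD ∅ then (1:ℝ) else 0) := by
          intro j' u'; split <;> norm_num
        have hD : (1:ℝ) ≤ ∑ j' ∈ T₀, ∑ u' ∈ BackNbhd (G j') π v,
            (if ω v = some T₀ ∧ j' ∈ (ω u').getD ∅ then (1:ℝ) else 0) := by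
          have h2 : (1:ℝ) ≤ ∑ u' ∈ BackNbhd (G j) π v,
              (if ω v = some T₀ ∧ j ∈ (ω u').getD ∅ then (1:ℝ) else 0) := by
            have := Finset.single_le_sum
              (f := fun u' => (if ω v = some T₀ ∧ j ∈ (ω u').getD ∅
                then (1:ℝ) else 0)) (fun i _ => hnn j i) hu
            simpa [hv, hju] using this
          refine le_trans h2 (Finset.single_le_sum
            (f := fun j' => ∑ u' ∈ BackNbhd (G j') π v,
              (if ω v = some T₀ ∧ j' ∈ (ω u').getD ∅ then (1:ℝ) else 0))
            (fun j' _ => Finset.sum_nonneg fun u' _ => hnn j' u') hj)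
        nlinarith [hb v T₀, mul_nonneg (hb v T₀) (sub_nonneg.mpr hD)]
  -- per-vertex expected value bound
  have hkey : ∀ v : Fin n,
      (∑ T : Finset (Fin k), b v T * x v T) / (4 * k * ρ)
        ≤ ∑ ω : Fin n → Option (Finset (Fin k)),
            P ω * b v (RoundAlloc G π ω v) := by
    intro v
    have hmono : (∑ ω : Fin n → Option (Finset (Fin k)), P ω *
        (∑ T : Finset (Fin k), b v T *
          ((if ω v = some T then (1:ℝ) else 0)
            - ∑ j ∈ T, ∑ u ∈ BackNbhd (G j) π v,
                (if ω v = some T ∧ j ∈ (ω u).getD ∅ then (1:ℝ) else 0))))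
        ≤ ∑ ω : Fin n → Option (Finset (Fin k)),
            P ω * b v (RoundAlloc G π ω v) :=
      Finset.sum_le_sum fun ω _ =>
        mul_le_mul_of_nonneg_left (hpt v ω) (hP0 ω)
    refine le_trans ?_ hmono
    -- compute the expectation exactly
    have hPT : ∀ T : Finset (Fin k),
        (∑ ω : Fin n → Option (Finset (Fin k)), P ω * (b v T *
          ((if ω v = some T then (1:ℝ) else 0)
            - ∑ j ∈ T, ∑ u ∈ BackNbhd (G j) π v,
                (if ω v = some T ∧ j ∈ (ω u).getD ∅ then (1:ℝ) else 0))))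
          = b v T * (x v T / c
              - (x v T / c) * ∑ j ∈ T, ∑ u ∈ BackNbhd (G j) π v, y j u / c) := by
      intro T
      have hPD : (∑ ω : Fin n → Option (Finset (Fin k)), P ω *
          ∑ j ∈ T, ∑ u ∈ BackNbhd (G j) π v,
            (if ω v = some T ∧ j ∈ (ω u).getD ∅ then (1:ℝ) else 0))
          = (x v T / c) * ∑ j ∈ T, ∑ u ∈ BackNbhd (G j) π v, y j u / c := by
        calc (∑ ω : Fin n → Option (Finset (Fin k)), P ω *
            ∑ j ∈ T, ∑ u ∈ BackNbhd (G j) π v,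
              (if ω v = some T ∧ j ∈ (ω u).getD ∅ then (1:ℝ) else 0))
            = ∑ j ∈ T, ∑ u ∈ BackNbhd (G j) π v,
                (∑ ω : Fin n → Option (Finset (Fin k)), P ω *
                  (if ω v = some T ∧ j ∈ (ω u).getD ∅ then (1:ℝ) else 0)) := by
              simp_rw [Finset.mul_sum]
              rw [Finset.sum_comm]
              exact Finset.sum_congr rfl fun j _ => Finset.sum_comm
          _ = ∑ j ∈ T, ∑ u ∈ BackNbhd (G j) π v, (x v T / c) * (y j u / c) :=
              Finset.sum_congr rfl fun j _ => Finset.sum_congr rfl fun u hu =>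
                hE2 v T j u (hne j v u hu)
          _ = (x v T / c) * ∑ j ∈ T, ∑ u ∈ BackNbhd (G j) π v, y j u / c := by
              simp_rw [Finset.mul_sum]
      calc (∑ ω : Fin n → Option (Finset (Fin k)), P ω * (b v T *
            ((if ω v = some T then (1:ℝ) else 0)
              - ∑ j ∈ T, ∑ u ∈ BackNbhd (G j) π v,
                  (if ω v = some T ∧ j ∈ (ω u).getD ∅ then (1:ℝ) else 0))))
          = ∑ ω : Fin n → Option (Finset (Fin k)),
              (b v T * (P ω * (if ω v = some T then (1:ℝ) else 0))
                - b v T * (P ω * ∑ j ∈ T, ∑ u ∈ BackNbhd (G j) π v,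
                    (if ω v = some T ∧ j ∈ (ω u).getD ∅ then (1:ℝ) else 0))) :=
            Finset.sum_congr rfl fun ω _ => by ring
        _ = b v T * (∑ ω : Fin n → Option (Finset (Fin k)),
              P ω * (if ω v = some T then (1:ℝ) else 0))
            - b v T * (∑ ω : Fin n → Option (Finset (Fin k)), P ω *
                ∑ j ∈ T, ∑ u ∈ BackNbhd (G j) π v,
                  (if ω v = some T ∧ j ∈ (ω u).getD ∅ then (1:ℝ) else 0)) := by
            rw [Finset.sum_sub_distrib, ← Finset.mul_sum, ← Finset.mul_sum]
        _ = _ := by rw [hE1, hPD]; ring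
    rw [Finset.sum_congr rfl fun ω (_ : ω ∈ univ) => Finset.mul_sum _ _ _,
      Finset.sum_comm, Finset.sum_congr rfl fun T (_ : T ∈ univ) => hPT T]
    -- now a purely arithmetic estimate
    have hsT : ∀ T : Finset (Fin k),
        (∑ j ∈ T, ∑ u ∈ BackNbhd (G j) π v, y j u / c) ≤ 1 / 2 := by
      intro T
      have h1 : ∀ j : Fin k,
          (∑ u ∈ BackNbhd (G j) π v, y j u / c) ≤ ρ / c := by
        intro j
        rw [← Finset.sum_div]
        exact (div_le_div_iff_of_pos_right hc0).mpr (hxLP v j)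
      calc (∑ j ∈ T, ∑ u ∈ BackNbhd (G j) π v, y j u / c)
          ≤ ∑ _j ∈ T, ρ / c := Finset.sum_le_sum fun j _ => h1 j
        _ = T.card * (ρ / c) := by rw [Finset.sum_const, nsmul_eq_mul]
        _ ≤ k * (ρ / c) := by
            have hcard : (T.card : ℝ) ≤ k := by
              exact_mod_cast (Finset.card_le_univ T).trans
                (le_of_eq (Fintype.card_fin k))
            have hrc : (0:ℝ) ≤ ρ / c := by positivity
            exact mul_le_mul_of_nonneg_right hcard hrc
        _ = 1 / 2 := by
            rw [hc]
            have hkne : (k:ℝ) ≠ 0 := by linarith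
            have hρne : ρ ≠ 0 := by linarith
            field_simp
    rw [Finset.sum_div]
    refine Finset.sum_le_sum fun T _ => ?_
    have hxc : (0:ℝ) ≤ x v T / c := div_nonneg (hx0 v T) hc0.le
    have h2 : x v T / c * (1 / 2) ≤ x v T / c * (1 - ∑ j ∈ T, ∑ u ∈ BackNbhd (G j) π v, y j u / c) :=
      mul_le_mul_of_nonneg_left (by linarith [hsT T]) hxc
    have h4 : (4:ℝ) * k * ρ = 2 * c := by rw [hc]; ring
    have hcne : c ≠ 0 := ne_of_gt hc0
    have h3 : b v T * x v T / (4 * k * ρ) = b v T * (x v T / c * (1 / 2)) := by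
      rw [h4]
      field_simp
      try ring
      try tauto
    rw [h3]
    calc b v T * (x v T / c * (1 / 2))
        ≤ b v T * (x v T / c * (1 - ∑ j ∈ T, ∑ u ∈ BackNbhd (G j) π v, y j u / c)) :=
          mul_le_mul_of_nonneg_left h2 (hb v T)
      _ = b v T * (x v T / c - x v T / c * ∑ j ∈ T, ∑ u ∈ BackNbhd (G j) π v, y j u / c) := by
          ring
  -- average over the distribution and extract a good sample
  have main : (∑ v : Fin n, ∑ T : Finset (Fin k), b v T * x v T) / (4 * k * ρ)
      ≤ ∑ ω : Fin n → Option (Finset (Fin k)),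
          P ω * ∑ v : Fin n, b v (RoundAlloc G π ω v) := by
    rw [Finset.sum_div]
    calc (∑ v : Fin n, (∑ T : Finset (Fin k), b v T * x v T) / (4 * k * ρ))
        ≤ ∑ v : Fin n, ∑ ω : Fin n → Option (Finset (Fin k)),
            P ω * b v (RoundAlloc G π ω v) :=
          Finset.sum_le_sum fun v _ => hkey v
      _ = ∑ ω : Fin n → Option (Finset (Fin k)), ∑ v : Fin n,
            P ω * b v (RoundAlloc G π ω v) := Finset.sum_comm
      _ = _ := Finset.sum_congr rfl fun ω _ => (Finset.mul_sum _ _ _).symm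
  have hex : ∃ ω : Fin n → Option (Finset (Fin k)),
      (∑ v : Fin n, ∑ T : Finset (Fin k), b v T * x v T) / (4 * k * ρ)
        ≤ ∑ v : Fin n, b v (RoundAlloc G π ω v) := by
    by_contra hcon
    push_neg at hcon
    have hω0 : ∃ ω : Fin n → Option (Finset (Fin k)), 0 < P ω := by
      by_contra h'
      push_neg at h'
      have : (∑ ω : Fin n → Option (Finset (Fin k)), P ω) ≤ 0 :=
        Finset.sum_nonpos fun ω _ => h' ω
      rw [hP1] at this; linarith
    obtain ⟨ω₀, hω₀⟩ := hω0
    have hlt : (∑ ω : Fin n → Option (Finset (Fin k)),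
        P ω * ∑ v : Fin n, b v (RoundAlloc G π ω v))
        < ∑ ω : Fin n → Option (Finset (Fin k)), P ω *
            ((∑ v : Fin n, ∑ T : Finset (Fin k), b v T * x v T) / (4 * k * ρ)) := by
      refine Finset.sum_lt_sum
        (fun ω _ => mul_le_mul_of_nonneg_left (hcon ω).le (hP0 ω))
        ⟨ω₀, Finset.mem_univ ω₀, mul_lt_mul_of_pos_left (hcon ω₀) hω₀⟩
    rw [← Finset.sum_mul, hP1, one_mul] at hlt
    linarith
  obtain ⟨ω, hω⟩ := hex
  exact ⟨RoundAlloc G π ω, roundAlloc_feasible G π ω, hω⟩
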